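/- Let D ⊆ (0,∞) be an interval and p : D → ℝ a continuous function with |x·p(x)| < 1 for all x ∈ D. Then: (a) there exists a differentiable function z : D → ℝ with z'(x) = x·p(x)/√(1−(x·p(x))²) for all x ∈ D; (b) every such z satisfies (1/x)·z'(x)/√(1+z'(x)²) = p(x) for all x ∈ D, i.e., the rotational surface generated by the graph of z has principal curvature along parallels equal to p(x); and (c) any two such functions z differ by an additive constant. Hence there is exactly one rotational surface (up to translations along the z-axis) whose principal curvature on parallels is p(x), and it has geometric linear momentum 𝒦(x) = x·p(x). -/
import Mathlib

open Set MeasureTheory intervalIntegral Filter Topology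

private lemma key_alg (u : ℝ) (hu : |u| < 1) :
    (u / Real.sqrt (1 - u ^ 2)) /
      Real.sqrt (1 + (u / Real.sqrt (1 - u ^ 2)) ^ 2) = u := by
  have hu2 : u ^ 2 < 1 := by
    have := abs_lt.mp hu; nlinarith
  have hpos : 0 < 1 - u ^ 2 := by linarith
  set s := Real.sqrt (1 - u ^ 2) with hs
  have hs0 : 0 < s := Real.sqrt_pos.mpr hpos
  have hs2 : s ^ 2 = 1 - u ^ 2 := Real.sq_sqrt hpos.le
  have h1 : 1 + (u / s) ^ 2 = (s⁻¹) ^ 2 := by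
    field_simp
    nlinarith
  rw [h1, Real.sqrt_sq (by positivity)]
  field_simp

private lemma key_alg' (x u : ℝ) (hx : 0 < x) (hu : |u| < 1) :
    (1 / x) * ((u / Real.sqrt (1 - u ^ 2)) /
      Real.sqrt (1 + (u / Real.sqrt (1 - u ^ 2)) ^ 2)) = u / x := by
  rw [key_alg u hu]; ring

/-- Prescribing the principal curvature on parallels p(x) with |x·p(x)| < 1:
(a) existence of a generatrix graph, (b) it has k_p = p, (c) uniqueness up to
z-translations; the geometric linear momentum is 𝒦(x) = x·p(x). -/
theorem stmt_1 (D : Set ℝ) (hD : D.OrdConnected) (hD0 : D ⊆ Set.Ioi 0)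
    (p : ℝ → ℝ) (hp : ContinuousOn p D)
    (hbound : ∀ x ∈ D, |x * p x| < 1) :
    (∃ z : ℝ → ℝ, ∀ x ∈ D,
        HasDerivAt z (x * p x / Real.sqrt (1 - (x * p x) ^ 2)) x) ∧
    (∀ z : ℝ → ℝ,
        (∀ x ∈ D, HasDerivAt z (x * p x / Real.sqrt (1 - (x * p x) ^ 2)) x) →
        ∀ x ∈ D, (1 / x) * (deriv z x / Real.sqrt (1 + (deriv z x) ^ 2)) = p x) ∧
    (∀ z₁ z₂ : ℝ → ℝ,
        (∀ x ∈ D, HasDerivAt z₁ (x * p x / Real.sqrt (1 - (x * p x) ^ 2)) x) →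
        (∀ x ∈ D, HasDerivAt z₂ (x * p x / Real.sqrt (1 - (x * p x) ^ 2)) x) →
        ∃ C : ℝ, ∀ x ∈ D, z₁ x - z₂ x = C) := by
  classical
  set f : ℝ → ℝ := fun x => x * p x / Real.sqrt (1 - (x * p x) ^ 2) with hfdef
  have hfc : ContinuousOn f D := by
    apply ContinuousOn.div
    · exact (continuousOn_id.mul hp)
    · exact Real.continuous_sqrt.comp_continuousOn
        (continuousOn_const.sub ((continuousOn_id.mul hp).pow 2))
    · intro x hx
      have hb := hbound x hx
      have : (x * p x) ^ 2 < 1 := by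
        have := abs_lt.mp hb; nlinarith
      have : 0 < 1 - (x * p x) ^ 2 := by linarith
      exact ne_of_gt (Real.sqrt_pos.mpr this)
  refine ⟨?_, ?_, ?_⟩
  · -- existence
    rcases D.eq_empty_or_nonempty with hDe | ⟨x₀, hx₀⟩
    · exact ⟨0, fun x hx => by simp [hDe] at hx⟩
    · set g : ℝ → ℝ := fun x =>
        if x ∈ D then f x else if x ≤ x₀ then f (sInf D) else f (sSup D) with hgdef
      have hDm : MeasurableSet D := hD.measurableSet
      have hgm : AEStronglyMeasurable g volume := by
        have h1 : AEStronglyMeasurable (D.indicator f) volume :=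
          (aestronglyMeasurable_indicator_iff hDm).mpr (hfc.aestronglyMeasurable hDm)
        have h2 : Measurable fun x : ℝ => if x ≤ x₀ then f (sInf D) else f (sSup D) := by
          exact Measurable.ite measurableSet_Iic measurable_const measurable_const
        have h3 : AEStronglyMeasurable
            (Dᶜ.indicator fun x => if x ≤ x₀ then f (sInf D) else f (sSup D)) volume :=
          ((h2.indicator hDm.compl)).aestronglyMeasurable
        have : g = D.indicator f +
            Dᶜ.indicator fun x => if x ≤ x₀ then f (sInf D) else f (sSup D) := by
          funext t
          by_cases ht : t ∈ D <;>
            simp [hgdef, Set.indicator, ht]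
        rw [this]
        exact h1.add h3
      refine ⟨fun x => ∫ t in x₀..x, g t, fun x hx => ?_⟩
      have hsub : Set.uIcc x₀ x ⊆ D := hD.uIcc_subset hx₀ hx
      have hgeq : ∀ t ∈ Set.uIcc x₀ x, g t = f t := fun t ht => if_pos (hsub ht)
      have hInt : IntervalIntegrable g volume x₀ x :=
        ((hfc.mono hsub).congr hgeq).intervalIntegrable
      have hmeas : StronglyMeasurableAtFilter g (𝓝 x) :=
        ⟨Set.univ, Filter.univ_mem, by rwa [Measure.restrict_univ]⟩
      have hcont : ContinuousAt g x := by
        rw [continuousAt_iff_continuous_left_right]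
        constructor
        · -- left continuity
          by_cases hex : ∃ y ∈ D, y < x
          · obtain ⟨y, hy, hyx⟩ := hex
            have hIcc : Set.Icc y x ⊆ D := hD.out hy hx
            have : ContinuousWithinAt g (Set.Icc y x) x := by
              refine ((hfc.mono hIcc) x (by simp [hyx.le])).congr
                (fun t ht => if_pos (hIcc ht)) (if_pos hx)
            refine this.mono_of_mem_nhdsWithin ?_
            refine Filter.mem_of_superset
              (Filter.inter_mem (mem_nhdsWithin_of_mem_nhds (Ici_mem_nhds hyx))
                self_mem_nhdsWithin) ?_
            rintro t ⟨ht1, ht2⟩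
            exact ⟨ht1, ht2⟩
          · push_neg at hex
            have hleast : IsLeast D x := ⟨hx, fun y hy => hex y hy⟩
            have hinf : sInf D = x := hleast.csInf_eq
            have : ∀ t ∈ Set.Iic x, g t = f x := by
              intro t ht
              rcases eq_or_lt_of_le (mem_Iic.mp ht) with h | h
              · rw [h]; exact if_pos hx
              · have htD : t ∉ D := fun htD => absurd h (not_lt.mpr (hleast.2 htD))
                have htx₀ : t ≤ x₀ := h.le.trans (hleast.2 hx₀)
                simp [hgdef, htD, htx₀, hinf]
            exact (continuousWithinAt_const (b := f x)).congr this (if_pos hx)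
        · -- right continuity
          by_cases hex : ∃ y ∈ D, x < y
          · obtain ⟨y, hy, hxy⟩ := hex
            have hIcc : Set.Icc x y ⊆ D := hD.out hx hy
            have : ContinuousWithinAt g (Set.Icc x y) x := by
              refine ((hfc.mono hIcc) x (by simp [hxy.le])).congr
                (fun t ht => if_pos (hIcc ht)) (if_pos hx)
            refine this.mono_of_mem_nhdsWithin ?_
            refine Filter.mem_of_superset
              (Filter.inter_mem (mem_nhdsWithin_of_mem_nhds (Iic_mem_nhds hxy))
                self_mem_nhdsWithin) ?_
            rintro t ⟨ht1, ht2⟩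
            exact ⟨ht2, ht1⟩
          · push_neg at hex
            have hgreat : IsGreatest D x := ⟨hx, fun y hy => hex y hy⟩
            have hsup : sSup D = x := hgreat.csSup_eq
            have : ∀ t ∈ Set.Ici x, g t = f x := by
              intro t ht
              rcases eq_or_lt_of_le (mem_Ici.mp ht) with h | h
              · rw [← h]; exact if_pos hx
              · have htD : t ∉ D := fun htD => absurd h (not_lt.mpr (hgreat.2 htD))
                have htx₀ : ¬ t ≤ x₀ := not_le.mpr ((hgreat.2 hx₀).trans_lt h)
                simp [hgdef, htD, htx₀, hsup]
            exact (continuousWithinAt_const (b := f x)).congr this (if_pos hx)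
      have := intervalIntegral.integral_hasDerivAt_right hInt hmeas hcont
      rwa [show g x = f x from if_pos hx] at this
  · -- k_p = p
    intro z hz x hx
    have hd : deriv z x = f x := (hz x hx).deriv
    have hx0 : (0 : ℝ) < x := hD0 hx
    have hb := hbound x hx
    have := key_alg' x (x * p x) hx0 hb
    rw [hd, hfdef]
    dsimp only
    rw [this]
    field_simp
  · -- uniqueness up to constants
    intro z₁ z₂ h₁ h₂
    rcases D.eq_empty_or_nonempty with hDe | ⟨x₀, hx₀⟩
    · exact ⟨0, fun x hx => by simp [hDe] at hx⟩
    refine ⟨z₁ x₀ - z₂ x₀, fun x hx => ?_⟩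
    have hconv : Convex ℝ D := convex_iff_ordConnected.mpr hD
    have key : ‖(fun t => z₁ t - z₂ t) x - (fun t => z₁ t - z₂ t) x₀‖ ≤ 0 * ‖x - x₀‖ := by
      refine hconv.norm_image_sub_le_of_norm_hasDerivWithin_le
        (f := fun t => z₁ t - z₂ t) (C := 0) (f' := fun _ => (0 : ℝ)) (fun y hy => ?_) (fun y hy => by simp) hx₀ hx
      have := ((h₁ y hy).sub (h₂ y hy))
      rw [sub_self] at this
      exact this.hasDerivWithinAt
    simp only [zero_mul, norm_le_zero_iff, sub_eq_zero] at key
    linarith [key]
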